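/- Let f : ℂ → ℂ be holomorphic on ℂ∖{0} with f(z) ≠ 0 for z ≠ 0, and suppose there exists g : ℂ → ℂ holomorphic on ℂ∖{0} with g(z) ≠ 0 for z ≠ 0 such that g(f(z)) = z and f(g(z)) = z for all z ≠ 0 (i.e. f is a biholomorphic self-map of ℂ∖{0}). Then there exists a ∈ ℂ with a ≠ 0 such that either f(z) = a·z for all z ≠ 0, or f(z) = a/z for all z ≠ 0. Conversely, every map of either of these two forms is such a biholomorphism of ℂ∖{0}. -/

import Mathlib

open Filter Topology Polynomial Bornology

lemma escape {f g : ℂ → ℂ} (hgd : ∀ z : ℂ, z ≠ 0 → DifferentiableAt ℂ g z)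
    (hg0 : ∀ z : ℂ, z ≠ 0 → g z ≠ 0)
    (hgf : ∀ z : ℂ, z ≠ 0 → g (f z) = z) :
    ∀ ε : ℝ, 0 < ε → ∃ δ > 0, ∀ z : ℂ, z ≠ 0 → ‖z‖ < δ → ‖f z‖ < ε ∨ ε⁻¹ < ‖f z‖ := by
  intro ε hε
  set K : Set ℂ := {w | ε ≤ ‖w‖ ∧ ‖w‖ ≤ ε⁻¹} with hK
  have hKne : ∀ w ∈ K, w ≠ 0 := by
    rintro w ⟨h1, _⟩ rfl
    simp at h1; linarith
  have hKc : IsCompact K := by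
    have h1 : IsClosed K := by
      have : K = (fun w : ℂ => ‖w‖) ⁻¹' (Set.Icc ε ε⁻¹) := by
        ext w; simp [hK, Set.mem_Icc]
      rw [this]
      exact isClosed_Icc.preimage (continuous_norm)
    have h2 : K ⊆ Metric.closedBall 0 ε⁻¹ := by
      intro w hw; simpa [Metric.mem_closedBall, dist_zero_right] using hw.2
    exact (isCompact_closedBall 0 ε⁻¹).of_isClosed_subset h1 h2
  have hgc : ContinuousOn g K := fun w hw =>
    ((hgd w (hKne w hw)).continuousAt).continuousWithinAt
  have hgKc : IsCompact (g '' K) := hKc.image_of_continuousOn hgc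
  have h0 : (0 : ℂ) ∉ g '' K := by
    rintro ⟨w, hw, hgw⟩
    exact hg0 w (hKne w hw) hgw
  obtain ⟨δ, hδ, hball⟩ : ∃ δ > 0, Metric.ball (0:ℂ) δ ⊆ (g '' K)ᶜ :=
    Metric.isOpen_iff.1 hgKc.isClosed.isOpen_compl 0 h0
  refine ⟨δ, hδ, fun z hz hzδ => ?_⟩
  by_contra h
  push_neg at h
  have hfK : f z ∈ K := ⟨h.1, h.2⟩
  have : z ∈ g '' K := ⟨f z, hfK, hgf z hz⟩
  exact hball (by simpa [Metric.mem_ball, dist_zero_right] using hzδ) this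

lemma punctured_ball_conn (δ : ℝ) (hδ : 0 < δ) :
    IsPreconnected {z : ℂ | z ≠ 0 ∧ ‖z‖ < δ} := by
  have hrank : 1 < Module.rank ℝ ℂ := by
    rw [Complex.rank_real_complex]; norm_num
  have hsph : IsConnected (Metric.sphere (0:ℂ) 1) :=
    isConnected_sphere hrank 0 zero_le_one
  have hIoo : IsConnected (Set.Ioo (0:ℝ) δ) :=
    ⟨⟨δ/2, by constructor <;> linarith⟩, isPreconnected_Ioo⟩
  have hprod : IsConnected (Set.Ioo (0:ℝ) δ ×ˢ Metric.sphere (0:ℂ) 1) := hIoo.prod hsph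
  have himg : IsConnected ((fun p : ℝ × ℂ => p.1 • p.2) ''
      (Set.Ioo (0:ℝ) δ ×ˢ Metric.sphere (0:ℂ) 1)) :=
    hprod.image _ (continuous_fst.smul continuous_snd).continuousOn
  have : ((fun p : ℝ × ℂ => p.1 • p.2) '' (Set.Ioo (0:ℝ) δ ×ˢ Metric.sphere (0:ℂ) 1))
      = {z : ℂ | z ≠ 0 ∧ ‖z‖ < δ} := by
    ext z
    constructor
    · rintro ⟨⟨t, w⟩, ⟨⟨ht0, htδ⟩, hw⟩, rfl⟩
      have hwn : ‖w‖ = 1 := by simpa [dist_zero_right] using hw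
      have hn : ‖t • w‖ = t := by
        rw [norm_smul, hwn, mul_one, Real.norm_eq_abs, abs_of_pos ht0]
      constructor
      · intro h; simp only at h; rw [h] at hn; simp at hn
        exact absurd hn.symm (ne_of_gt ht0)
      · rw [hn]; exact htδ
    · rintro ⟨hz, hzδ⟩
      have habs : ‖z‖ ≠ 0 := by
        simpa using norm_ne_zero_iff.2 hz
      have hC : (‖z‖ : ℂ) ≠ 0 := by simpa using norm_ne_zero_iff.2 hz
      refine ⟨⟨‖z‖, ‖z‖⁻¹ • z⟩, ⟨⟨norm_pos_iff.2 hz, hzδ⟩, ?_⟩, ?_⟩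
      · have h1 : |‖z‖⁻¹| = ‖z‖⁻¹ :=
          abs_of_nonneg (by positivity)
        simp [dist_zero_right, norm_smul, Real.norm_eq_abs, h1,
          inv_mul_cancel₀ habs]
      · simp only [smul_smul, Complex.real_smul, Complex.ofReal_inv]
        rw [mul_comm ((‖z‖:ℂ)) _, mul_assoc, mul_comm z _, ← mul_assoc,
          inv_mul_cancel₀ hC, one_mul]
  rw [this] at himg
  exact himg.isPreconnected

lemma dichotomy {f g : ℂ → ℂ} (hfd : ∀ z : ℂ, z ≠ 0 → DifferentiableAt ℂ f z)
    (hgd : ∀ z : ℂ, z ≠ 0 → DifferentiableAt ℂ g z)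
    (hg0 : ∀ z : ℂ, z ≠ 0 → g z ≠ 0)
    (hgf : ∀ z : ℂ, z ≠ 0 → g (f z) = z) :
    Tendsto f (𝓝[≠] (0:ℂ)) (𝓝 0) ∨ Tendsto (fun z => (f z)⁻¹) (𝓝[≠] (0:ℂ)) (𝓝 0) := by
  obtain ⟨δ₀, hδ₀, hesc⟩ := escape hgd hg0 hgf (1/2) (by norm_num)
  set P : Set ℂ := {z | z ≠ 0 ∧ ‖z‖ < δ₀} with hP
  have hPc : IsPreconnected P := punctured_ball_conn δ₀ hδ₀
  set u : Set ℂ := {z | z ≠ 0 ∧ ‖f z‖ < 1} with hu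
  set v : Set ℂ := {z | z ≠ 0 ∧ 1 < ‖f z‖} with hv
  have hfc : ContinuousOn f {(0:ℂ)}ᶜ := fun z hz =>
    ((hfd z hz).continuousAt).continuousWithinAt
  have hopen : IsOpen ({(0:ℂ)}ᶜ : Set ℂ) := isOpen_compl_singleton
  have huo : IsOpen u := by
    have h := hfc.norm.isOpen_inter_preimage hopen (isOpen_Iio (a := (1:ℝ)))
    convert h using 1
    ext z; simp [hu]
  have hvo : IsOpen v := by
    have h := hfc.norm.isOpen_inter_preimage hopen (isOpen_Ioi (a := (1:ℝ)))
    convert h using 1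
    ext z; simp [hv]
  have hcov : P ⊆ u ∪ v := by
    rintro z ⟨hz, hzδ⟩
    rcases hesc z hz hzδ with h | h
    · left; exact ⟨hz, by linarith⟩
    · right; refine ⟨hz, ?_⟩
      rw [show ((1:ℝ)/2)⁻¹ = 2 by norm_num] at h; linarith
  have hdisj : P ∩ (u ∩ v) = ∅ := by
    ext z; simp only [Set.mem_inter_iff, Set.mem_empty_iff_false, iff_false]
    rintro ⟨_, ⟨_, h1⟩, ⟨_, h2⟩⟩; linarith
  have key : (∀ z ∈ P, ‖f z‖ < 1) ∨ (∀ z ∈ P, 1 < ‖f z‖) := by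
    by_contra h
    push_neg at h
    obtain ⟨⟨z₁, hz₁, hz₁'⟩, ⟨z₂, hz₂, hz₂'⟩⟩ := h
    have h1 : (P ∩ v).Nonempty := by
      refine ⟨z₁, hz₁, ?_⟩
      rcases hcov hz₁ with h | h
      · exact absurd h.2 (not_lt.2 hz₁')
      · exact h
    have h2 : (P ∩ u).Nonempty := by
      refine ⟨z₂, hz₂, ?_⟩
      rcases hcov hz₂ with h | h
      · exact h
      · exact absurd h.2 (not_lt.2 hz₂')
    have := hPc u v huo hvo hcov h2 h1
    rw [Set.nonempty_iff_ne_empty] at this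
    exact this hdisj
  rcases key with hsmall | hbig
  · left
    rw [Metric.tendsto_nhdsWithin_nhds]
    intro ε hε
    obtain ⟨δ', hδ', hesc'⟩ := escape hgd hg0 hgf (min ε (1/2)) (by positivity)
    refine ⟨min δ₀ δ', by positivity, fun {x} hx hxd => ?_⟩
    simp only [Set.mem_compl_iff, Set.mem_singleton_iff] at hx
    rw [dist_zero_right] at hxd ⊢
    rcases hesc' x hx (lt_of_lt_of_le hxd (min_le_right _ _)) with h | h
    · exact lt_of_lt_of_le h (min_le_left _ _)
    · exfalso
      have hxP : x ∈ P := ⟨hx, lt_of_lt_of_le hxd (min_le_left _ _)⟩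
      have h2 : (min ε (1/2))⁻¹ ≥ 2 := by
        rw [ge_iff_le, le_inv_comm₀ (by norm_num) (by positivity)]
        exact le_trans (min_le_right _ _) (by norm_num)
      have := hsmall x hxP
      linarith
  · right
    rw [Metric.tendsto_nhdsWithin_nhds]
    intro ε hε
    obtain ⟨δ', hδ', hesc'⟩ := escape hgd hg0 hgf (min ε (1/2)) (by positivity)
    refine ⟨min δ₀ δ', by positivity, fun {x} hx hxd => ?_⟩
    simp only [Set.mem_compl_iff, Set.mem_singleton_iff] at hx
    rw [dist_zero_right] at hxd ⊢
    rcases hesc' x hx (lt_of_lt_of_le hxd (min_le_right _ _)) with h | h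
    · exfalso
      have hxP : x ∈ P := ⟨hx, lt_of_lt_of_le hxd (min_le_left _ _)⟩
      have := hbig x hxP
      have : min ε (1/2) ≤ 1/2 := min_le_right _ _
      linarith [hbig x hxP, min_le_right ε (1/2:ℝ)]
    · rw [norm_inv]
      have hfx : 0 < ‖f x‖ := by
        have : (0:ℝ) < (min ε (1/2))⁻¹ := by positivity
        linarith
      rw [inv_lt_comm₀ hfx hε]
      calc ε⁻¹ ≤ (min ε (1/2))⁻¹ := by
            apply inv_anti₀ (by positivity) (min_le_left _ _)
        _ < ‖f x‖ := h

lemma poly_of_growth : ∀ (n : ℕ) (F : ℂ → ℂ), Differentiable ℂ F →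
    (∃ C M : ℝ, ∀ z : ℂ, M ≤ ‖z‖ → ‖F z‖ ≤ C * ‖z‖ ^ n) →
    ∃ p : Polynomial ℂ, p.natDegree ≤ n ∧ ∀ z, F z = p.eval z := by
  intro n
  induction n with
  | zero =>
    rintro F hF ⟨C, M, hCM⟩
    obtain ⟨C', hC'⟩ : ∃ C', ∀ z ∈ Metric.closedBall (0:ℂ) |M|, ‖F z‖ ≤ C' :=
      (isCompact_closedBall 0 |M|).exists_bound_of_continuousOn
        hF.continuous.continuousOn
    have hb : IsBounded (Set.range F) := by
      rw [isBounded_iff_forall_norm_le]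
      refine ⟨max (C * 1) C', ?_⟩
      rintro _ ⟨z, rfl⟩
      rcases le_or_gt M ‖z‖ with h | h
      · exact le_trans (by simpa using hCM z h) (le_max_left _ _)
      · refine le_trans (hC' z ?_) (le_max_right _ _)
        simp only [Metric.mem_closedBall, dist_zero_right]
        exact le_trans h.le (le_abs_self M)
    exact ⟨Polynomial.C (F 0), by simp, fun z => by
      simp [hF.apply_eq_apply_of_bounded hb z 0]⟩
  | succ n ih =>
    rintro F hF ⟨C, M, hCM⟩
    set F₁ : ℂ → ℂ := dslope F 0 with hF₁
    have hF₁d : Differentiable ℂ F₁ := by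
      have := (Complex.differentiableOn_dslope (s := Set.univ)
        (by simp : Set.univ ∈ nhds (0:ℂ))).2 hF.differentiableOn
      rwa [← differentiableOn_univ]
    have hkey : ∀ z : ℂ, F z = F 0 + z * F₁ z := by
      intro z
      have := sub_smul_dslope F 0 z
      simp only [sub_zero, smul_eq_mul] at this
      linear_combination -this
    have hgrow : ∃ C' M' : ℝ, ∀ z : ℂ, M' ≤ ‖z‖ → ‖F₁ z‖ ≤ C' * ‖z‖ ^ n := by
      refine ⟨|C| + ‖F 0‖, max M 1, fun z hz => ?_⟩
      have hz1 : (1:ℝ) ≤ ‖z‖ := le_trans (le_max_right _ _) hz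
      have hzM : M ≤ ‖z‖ := le_trans (le_max_left _ _) hz
      have hz0 : ‖z‖ ≠ 0 := by linarith
      have h1 : ‖z‖ * ‖F₁ z‖ = ‖F z - F 0‖ := by
        rw [← norm_mul]
        congr 1
        have := sub_smul_dslope F 0 z
        simpa [smul_eq_mul] using this
      have h2 : ‖F z - F 0‖ ≤ C * ‖z‖ ^ (n+1) + ‖F 0‖ :=
        le_trans (norm_sub_le _ _) (by linarith [hCM z hzM])
      have h3 : ‖F₁ z‖ = ‖z‖⁻¹ * ‖F z - F 0‖ := by
        rw [← h1, ← mul_assoc, inv_mul_cancel₀ hz0, one_mul]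
      have hzpos : (0:ℝ) < ‖z‖ := by linarith
      have hpow : (1:ℝ) ≤ ‖z‖ ^ n := one_le_pow₀ hz1
      calc ‖F₁ z‖ = ‖z‖⁻¹ * ‖F z - F 0‖ := h3
        _ ≤ ‖z‖⁻¹ * (C * ‖z‖ ^ (n+1) + ‖F 0‖) := by
            apply mul_le_mul_of_nonneg_left h2 (by positivity)
        _ = C * ‖z‖ ^ n + ‖F 0‖ * ‖z‖⁻¹ := by
            have hz0' : ‖z‖ ≠ 0 := hz0
            rw [pow_succ]
            field_simp
        _ ≤ |C| * ‖z‖ ^ n + ‖F 0‖ * 1 := by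
            have e1 : C * ‖z‖ ^ n ≤ |C| * ‖z‖ ^ n :=
              mul_le_mul_of_nonneg_right (le_abs_self C) (by positivity)
            have e2 : ‖F 0‖ * ‖z‖⁻¹ ≤ ‖F 0‖ * 1 :=
              mul_le_mul_of_nonneg_left (inv_le_one_of_one_le₀ hz1) (norm_nonneg _)
            linarith
        _ ≤ (|C| + ‖F 0‖) * ‖z‖ ^ n := by nlinarith [norm_nonneg (F 0), abs_nonneg C]
    obtain ⟨p₁, hp₁d, hp₁⟩ := ih F₁ hF₁d hgrow
    refine ⟨Polynomial.C (F 0) + Polynomial.X * p₁, ?_, fun z => ?_⟩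
    · refine le_trans (Polynomial.natDegree_add_le _ _) ?_
      simp only [Polynomial.natDegree_C, max_le_iff]
      constructor
      · omega
      · refine le_trans (Polynomial.natDegree_mul_le) ?_
        simp [Polynomial.natDegree_X]
        omega
    · simp [hkey z, hp₁ z]

lemma injective_poly_deg_le_one (p : Polynomial ℂ)
    (hinj : Function.Injective fun z => p.eval z) : p.natDegree ≤ 1 := by
  by_contra hd
  push_neg at hd
  set d := p.natDegree with hdd
  have hd2 : 2 ≤ d := hd
  set q : Polynomial ℂ := p - C (p.eval 0) with hq
  have hqd : q.natDegree = d := by rw [hq, natDegree_sub_C]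
  have hq0 : q ≠ 0 := fun h => by simp [h] at hqd; omega
  have hsplit : Splits q := IsAlgClosed.splits q
  have hcard : q.roots.card = d := by
    have := (hsplit.natDegree_eq_card_roots)
    simpa [hqd] using this.symm
  have hroots : ∀ z ∈ q.roots, z = 0 := by
    intro z hz
    have hzr : q.eval z = 0 := (mem_roots hq0).1 hz
    have h2 : p.eval z = p.eval 0 := by
      have h3 : p.eval z - p.eval 0 = 0 := by simpa [hq] using hzr
      exact sub_eq_zero.1 h3
    exact hinj (a₁ := z) (a₂ := 0) h2
  have hrep : q.roots = Multiset.replicate d 0 := by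
    rw [Multiset.eq_replicate]
    exact ⟨hcard, hroots⟩
  have hfact : q = C q.leadingCoeff * X ^ d := by
    have := hsplit.eq_prod_roots
    rw [hrep] at this
    simpa [Multiset.map_replicate, Multiset.prod_replicate] using this
  have heval : ∀ z : ℂ, p.eval z = q.leadingCoeff * z ^ d + p.eval 0 := by
    intro z
    have : q.eval z = p.eval z - p.eval 0 := by simp [hq]
    rw [hfact] at this
    simp at this
    linear_combination -this
  have hlc : q.leadingCoeff ≠ 0 := leadingCoeff_ne_zero.2 hq0
  -- now contradiction with injectivity using a nontrivial d-th root of unity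
  have hdne : d ≠ 0 := by omega
  have hζ := Complex.isPrimitiveRoot_exp d hdne
  set ζ := Complex.exp (2 * Real.pi * Complex.I / d) with hζdef
  have hζd : ζ ^ d = 1 := hζ.pow_eq_one
  have hζne : ζ ≠ 1 := by
    intro h
    have h1 : d ∣ 1 := hζ.dvd_of_pow_eq_one 1 (by rw [h]; simp)
    have := Nat.le_of_dvd one_pos h1
    omega
  have he : p.eval ζ = p.eval 1 := by
    have e1 := heval ζ
    have e2 := heval 1
    rw [hζd] at e1
    rw [one_pow] at e2
    rw [e1, e2]
  exact hζne (hinj (a₁ := ζ) (a₂ := 1) he)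

lemma caseA {f g : ℂ → ℂ}
    (hfd : ∀ z : ℂ, z ≠ 0 → DifferentiableAt ℂ f z)
    (hf0 : ∀ z : ℂ, z ≠ 0 → f z ≠ 0)
    (hgd : ∀ z : ℂ, z ≠ 0 → DifferentiableAt ℂ g z)
    (hg0 : ∀ z : ℂ, z ≠ 0 → g z ≠ 0)
    (hgf : ∀ z : ℂ, z ≠ 0 → g (f z) = z)
    (hfg : ∀ z : ℂ, z ≠ 0 → f (g z) = z)
    (htend : Tendsto f (𝓝[≠] (0:ℂ)) (𝓝 0)) :
    ∃ a : ℂ, a ≠ 0 ∧ ∀ z : ℂ, z ≠ 0 → f z = a * z := by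
  -- g also tends to 0 at 0
  have hgtend : Tendsto g (𝓝[≠] (0:ℂ)) (𝓝 0) := by
    rcases dichotomy hgd hfd hf0 hfg with h | h
    · exact h
    · exfalso
      have hfpunct : Tendsto f (𝓝[≠] (0:ℂ)) (𝓝[≠] (0:ℂ)) := by
        rw [tendsto_nhdsWithin_iff]
        exact ⟨htend, eventually_mem_nhdsWithin.mono fun z hz =>
          hf0 z hz⟩
      have h2 : Tendsto (fun z => (g (f z))⁻¹) (𝓝[≠] (0:ℂ)) (𝓝 0) := h.comp hfpunct
      have h3 : Tendsto (fun z : ℂ => z⁻¹) (𝓝[≠] (0:ℂ)) (𝓝 0) := by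
        refine h2.congr' ?_
        filter_upwards [eventually_mem_nhdsWithin] with z hz
        rw [hgf z hz]
      have h4 : ∀ᶠ z : ℂ in 𝓝[≠] (0:ℂ), ‖z⁻¹‖ < 1 := by
        have := h3 (Metric.ball_mem_nhds (0:ℂ) one_pos)
        filter_upwards [this] with z hz
        simpa [dist_zero_right] using hz
      obtain ⟨ε, hε, hball⟩ := Metric.mem_nhdsWithin_iff.1 h4
      set z₀ : ℂ := ((min (ε/2) (1/2) : ℝ) : ℂ) with hz₀
      have hz₀pos : (0:ℝ) < min (ε/2) (1/2) := by positivity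
      have hz₀ne : z₀ ≠ 0 := by
        simp only [hz₀, ne_eq, Complex.ofReal_eq_zero]
        exact ne_of_gt hz₀pos
      have hz₀mem : z₀ ∈ Metric.ball (0:ℂ) ε ∩ {(0:ℂ)}ᶜ := by
        constructor
        · simp only [Metric.mem_ball, dist_zero_right, hz₀, Complex.norm_real,
            Real.norm_eq_abs, abs_of_pos hz₀pos]
          calc min (ε/2) (1/2) ≤ ε/2 := min_le_left _ _
            _ < ε := by linarith
        · exact hz₀ne
      have hlt : ‖z₀⁻¹‖ < 1 := hball hz₀mem
      rw [norm_inv] at hlt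
      have h5 : ‖z₀‖ ≤ 1/2 := by
        simp only [hz₀, Complex.norm_real, Real.norm_eq_abs, abs_of_pos hz₀pos]
        exact min_le_right _ _
      have h6 : (0:ℝ) < ‖z₀‖ := norm_pos_iff.2 hz₀ne
      have h7 : ‖z₀‖⁻¹ ≥ 2 := by
        rw [ge_iff_le, le_inv_comm₀ (by norm_num) h6]
        linarith
      linarith
  -- extensions
  classical
  set F : ℂ → ℂ := Function.update f 0 0 with hF
  set G : ℂ → ℂ := Function.update g 0 0 with hG
  have hF0 : F 0 = 0 := Function.update_self 0 0 f
  have hG0 : G 0 = 0 := Function.update_self 0 0 g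
  have hFne : ∀ z : ℂ, z ≠ 0 → F z = f z := fun z hz => Function.update_of_ne hz 0 f
  have hGne : ∀ z : ℂ, z ≠ 0 → G z = g z := fun z hz => Function.update_of_ne hz 0 g
  have hext : ∀ (u : ℂ → ℂ) (hu : ∀ z : ℂ, z ≠ 0 → DifferentiableAt ℂ u z)
      (hut : Tendsto u (𝓝[≠] (0:ℂ)) (𝓝 0)), Differentiable ℂ (Function.update u 0 0) := by
    intro u hu hut
    intro z
    rcases eq_or_ne z 0 with rfl | hz
    · have hcont : ContinuousAt (Function.update u 0 0) 0 := continuousAt_update_same.2 hut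
      have hdiff : ∀ᶠ w in 𝓝[≠] (0:ℂ), DifferentiableAt ℂ (Function.update u 0 0) w := by
        filter_upwards [eventually_mem_nhdsWithin] with w hw
        have hmem : {(0:ℂ)}ᶜ ∈ 𝓝 w := isOpen_compl_singleton.mem_nhds hw
        refine (hu w hw).congr_of_eventuallyEq ?_
        filter_upwards [hmem] with x hx
        exact Function.update_of_ne hx 0 u
      exact (Complex.analyticAt_of_differentiable_on_punctured_nhds_of_continuousAt
        hdiff hcont).differentiableAt
    · have hmem : {(0:ℂ)}ᶜ ∈ 𝓝 z := isOpen_compl_singleton.mem_nhds hz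
      refine (hu z hz).congr_of_eventuallyEq ?_
      filter_upwards [hmem] with x hx
      exact Function.update_of_ne hx 0 u
  have hFd : Differentiable ℂ F := hext f hfd htend
  have hGd : Differentiable ℂ G := hext g hgd hgtend
  have hGF : ∀ z : ℂ, G (F z) = z := by
    intro z
    rcases eq_or_ne z 0 with rfl | hz
    · rw [hF0, hG0]
    · rw [hFne z hz, hGne (f z) (hf0 z hz), hgf z hz]
  have hFG : ∀ z : ℂ, F (G z) = z := by
    intro z
    rcases eq_or_ne z 0 with rfl | hz
    · rw [hG0, hF0]
    · rw [hGne z hz, hFne (g z) (hg0 z hz), hfg z hz]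
  have hFinj : Function.Injective F := Function.LeftInverse.injective hGF
  have hFz : ∀ z : ℂ, z ≠ 0 → F z ≠ 0 := fun z hz => by
    rw [hFne z hz]; exact hf0 z hz
  -- properness
  have hprop : ∀ R : ℝ, 0 < R → ∃ M : ℝ, ∀ z : ℂ, M < ‖z‖ → R < ‖F z‖ := by
    intro R hR
    have hSc : IsCompact (G '' Metric.closedBall 0 R) :=
      (isCompact_closedBall (0:ℂ) R).image hGd.continuous
    obtain ⟨M, hM⟩ := hSc.isBounded.exists_norm_le (E := ℂ)
    refine ⟨M, fun z hz => ?_⟩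
    by_contra hcon
    push_neg at hcon
    have : z ∈ G '' Metric.closedBall 0 R :=
      ⟨F z, by simpa [Metric.mem_closedBall, dist_zero_right] using hcon, hGF z⟩
    exact absurd (hM z this) (not_le.2 hz)
  -- the auxiliary function φ
  set φ : ℂ → ℂ := fun z => (F z⁻¹)⁻¹ with hφdef
  have hφ0 : φ 0 = 0 := by simp [hφdef, hF0]
  have hφd : ∀ z : ℂ, z ≠ 0 → DifferentiableAt ℂ φ z := by
    intro z hz
    have h1 : DifferentiableAt ℂ (fun z : ℂ => F z⁻¹) z :=
      (hFd (z⁻¹)).comp z (differentiableAt_inv hz)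
    exact h1.inv (hFz _ (inv_ne_zero hz))
  have hφcont : ContinuousAt φ 0 := by
    rw [ContinuousAt, hφ0]
    rw [Metric.tendsto_nhds]
    intro ε hε
    obtain ⟨M, hM⟩ := hprop (max ε⁻¹ 1) (by positivity)
    have hM1 : (0:ℝ) < max M 1 := by positivity
    rw [Metric.eventually_nhds_iff]
    refine ⟨(max M 1)⁻¹, by positivity, fun {z} hzd => ?_⟩
    rw [dist_zero_right] at hzd ⊢
    rcases eq_or_ne z 0 with rfl | hz
    · rw [hφ0]; simpa using hε
    · have hzpos : (0:ℝ) < ‖z‖ := norm_pos_iff.2 hz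
      have hzi : max M 1 < ‖z⁻¹‖ := by
        rw [norm_inv]
        rw [lt_inv_comm₀ hM1 hzpos]
        exact hzd
      have hbig : max ε⁻¹ 1 < ‖F z⁻¹‖ := hM (z⁻¹) (lt_of_le_of_lt (le_max_left M 1) hzi)
      have hFpos : (0:ℝ) < ‖F z⁻¹‖ := lt_trans (by positivity) hbig
      rw [hφdef]
      simp only [norm_inv]
      rw [inv_lt_comm₀ hFpos hε]
      exact lt_of_le_of_lt (le_max_left ε⁻¹ 1) hbig
  have hφan : AnalyticAt ℂ φ 0 := by
    apply Complex.analyticAt_of_differentiable_on_punctured_nhds_of_continuousAt _ hφcont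
    filter_upwards [eventually_mem_nhdsWithin] with w hw
    exact hφd w hw
  have hφne : ∀ z : ℂ, z ≠ 0 → φ z ≠ 0 := fun z hz =>
    inv_ne_zero (hFz _ (inv_ne_zero hz))
  have hord_ne_top : analyticOrderAt φ 0 ≠ ⊤ := by
    intro htop
    have hcon := analyticOrderAt_eq_top.1 htop
    rw [Metric.eventually_nhds_iff] at hcon
    obtain ⟨ε, hε, hcon⟩ := hcon
    have hz : ((ε/2 : ℝ) : ℂ) ≠ 0 := by
      simp only [ne_eq, Complex.ofReal_eq_zero]
      positivity
    have := hcon (y := ((ε/2 : ℝ) : ℂ)) (by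
      rw [dist_zero_right]
      simp only [Complex.norm_real, Real.norm_eq_abs, abs_of_pos (by positivity : (0:ℝ) < ε/2)]
      linarith)
    exact hφne _ hz this
  obtain ⟨n, hn'⟩ := WithTop.ne_top_iff_exists.1 hord_ne_top
  have hn : analyticOrderAt φ 0 = n := hn'.symm
  obtain ⟨ψ, hψan, hψ0, hψeq⟩ := (hφan.analyticOrderAt_eq_natCast).1 hn
  have hn1 : 1 ≤ n := by
    by_contra hcon
    push_neg at hcon
    interval_cases n
    have := hψeq.self_of_nhds
    simp [hφ0] at this
    exact hψ0 this.symm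
  -- growth bound
  have hψsmall : ∀ᶠ z in 𝓝 (0:ℂ), ‖ψ 0‖/2 < ‖ψ z‖ := by
    have hc : ContinuousAt (fun z => ‖ψ z‖) 0 := hψan.continuousAt.norm
    have h2 : (0:ℝ) < ‖ψ 0‖ := norm_pos_iff.2 hψ0
    exact hc.eventually (eventually_gt_nhds (by linarith : ‖ψ 0‖/2 < ‖ψ 0‖))
  set c : ℝ := ‖ψ 0‖/2 with hc
  have hcpos : (0:ℝ) < c := by
    have : (0:ℝ) < ‖ψ 0‖ := norm_pos_iff.2 hψ0
    simp only [hc]; linarith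
  obtain ⟨δ, hδ, hδball⟩ := Metric.eventually_nhds_iff.1 (hψeq.and hψsmall)
  have hgrowth : ∀ w : ℂ, δ⁻¹ + 1 ≤ ‖w‖ → ‖F w‖ ≤ c⁻¹ * ‖w‖ ^ n := by
    intro w hw
    have hδipos : (0:ℝ) < δ⁻¹ := by positivity
    have hwpos : (0:ℝ) < ‖w‖ := by linarith
    have hwne : w ≠ 0 := norm_pos_iff.1 hwpos
    set z : ℂ := w⁻¹ with hz
    have hzne : z ≠ 0 := inv_ne_zero hwne
    have hzd : dist z 0 < δ := by
      rw [dist_zero_right, hz, norm_inv]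
      rw [inv_lt_comm₀ hwpos hδ]
      linarith
    obtain ⟨heq, hlt⟩ := hδball hzd
    have hzinv : z⁻¹ = w := inv_inv w
    have hφz : φ z = (F w)⁻¹ := by rw [hφdef]; simp only [hz, inv_inv]
    have hFw : F w ≠ 0 := hFz w hwne
    have hnorm : ‖F w‖⁻¹ = ‖z‖ ^ n * ‖ψ z‖ := by
      rw [← norm_inv, ← hφz, heq]
      simp [norm_smul, norm_pow]
    have hznorm : ‖z‖ = ‖w‖⁻¹ := by rw [hz, norm_inv]
    have hFwpos : (0:ℝ) < ‖F w‖ := norm_pos_iff.2 hFw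
    have hlow : ‖w‖⁻¹ ^ n * c ≤ ‖F w‖⁻¹ := by
      rw [hnorm, hznorm]
      exact mul_le_mul_of_nonneg_left hlt.le (by positivity)
    have h2 : ‖F w‖ ≤ (‖w‖⁻¹ ^ n * c)⁻¹ := by
      rw [← inv_inv (‖F w‖)]
      exact inv_anti₀ (by positivity) hlow
    calc ‖F w‖ ≤ (‖w‖⁻¹ ^ n * c)⁻¹ := h2
      _ = c⁻¹ * ‖w‖ ^ n := by
          rw [mul_inv, inv_pow, inv_inv]
          ring
  obtain ⟨p, hpdeg, hpF⟩ := poly_of_growth n F hFd ⟨c⁻¹, δ⁻¹ + 1, hgrowth⟩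
  have hpinj : Function.Injective fun z => p.eval z := by
    intro a b hab
    apply hFinj
    rw [hpF a, hpF b]
    exact hab
  have hdeg1 : p.natDegree ≤ 1 := injective_poly_deg_le_one p hpinj
  have hc0 : p.coeff 0 = 0 := by
    rw [Polynomial.coeff_zero_eq_eval_zero, ← hpF 0, hF0]
  have heval : ∀ z : ℂ, p.eval z = p.coeff 1 * z := by
    intro z
    conv_lhs => rw [Polynomial.eq_X_add_C_of_natDegree_le_one hdeg1]
    simp [hc0]
  refine ⟨p.coeff 1, ?_, fun z hz => ?_⟩
  · intro hcon
    have h1 : f 1 = 0 := by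
      have := hpF 1
      rw [hFne 1 one_ne_zero] at this
      rw [this, heval, hcon, zero_mul]
    exact hf0 1 one_ne_zero h1
  · rw [← hFne z hz, hpF z, heval]

/-- A biholomorphic self-map of `ℂ∖{0}`: holomorphic, nonvanishing, with a holomorphic
nonvanishing two-sided inverse on `ℂ∖{0}`. -/
def IsBiholoCStar (f : ℂ → ℂ) : Prop :=
  (∀ z : ℂ, z ≠ 0 → DifferentiableAt ℂ f z) ∧
  (∀ z : ℂ, z ≠ 0 → f z ≠ 0) ∧
  ∃ g : ℂ → ℂ,
    (∀ z : ℂ, z ≠ 0 → DifferentiableAt ℂ g z) ∧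
    (∀ z : ℂ, z ≠ 0 → g z ≠ 0) ∧
    (∀ z : ℂ, z ≠ 0 → g (f z) = z) ∧
    (∀ z : ℂ, z ≠ 0 → f (g z) = z)

lemma easy_dir (a : ℂ) (ha : a ≠ 0) :
    IsBiholoCStar (fun z : ℂ => a * z) ∧ IsBiholoCStar (fun z : ℂ => a / z) := by
  constructor
  · refine ⟨fun z hz => ?_, fun z hz => mul_ne_zero ha hz, fun z => a⁻¹ * z,
      fun z hz => ?_, fun z hz => mul_ne_zero (inv_ne_zero ha) hz, fun z hz => ?_, fun z hz => ?_⟩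
    · exact (differentiableAt_const a).mul differentiableAt_id
    · exact (differentiableAt_const a⁻¹).mul differentiableAt_id
    · field_simp
    · field_simp
  · refine ⟨fun z hz => ?_, fun z hz => div_ne_zero ha hz, fun z => a / z,
      fun z hz => ?_, fun z hz => div_ne_zero ha hz, fun z hz => ?_, fun z hz => ?_⟩
    · exact (differentiableAt_const a).div differentiableAt_id hz
    · exact (differentiableAt_const a).div differentiableAt_id hz
    · field_simp
    · field_simp

/-- the biholomorphisms of `ℂ∖{0}` are exactly the maps `z ↦ a·z` and
`z ↦ a/z` with `a ≠ 0`. -/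
theorem stmt_2 :
    (∀ f : ℂ → ℂ, IsBiholoCStar f →
      ∃ a : ℂ, a ≠ 0 ∧
        ((∀ z : ℂ, z ≠ 0 → f z = a * z) ∨ (∀ z : ℂ, z ≠ 0 → f z = a / z))) ∧
    (∀ a : ℂ, a ≠ 0 →
      IsBiholoCStar (fun z : ℂ => a * z) ∧ IsBiholoCStar (fun z : ℂ => a / z)) := by
  constructor
  · rintro f ⟨hfd, hf0, g, hgd, hg0, hgf, hfg⟩
    rcases dichotomy hfd hgd hg0 hgf with htend | htend
    · obtain ⟨a, ha, hlin⟩ := caseA hfd hf0 hgd hg0 hgf hfg htend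
      exact ⟨a, ha, Or.inl hlin⟩
    · -- apply caseA to z ↦ (f z)⁻¹
      set f' : ℂ → ℂ := fun z => (f z)⁻¹ with hf'
      set g' : ℂ → ℂ := fun w => g w⁻¹ with hg'
      have hf'd : ∀ z : ℂ, z ≠ 0 → DifferentiableAt ℂ f' z :=
        fun z hz => (hfd z hz).inv (hf0 z hz)
      have hf'0 : ∀ z : ℂ, z ≠ 0 → f' z ≠ 0 :=
        fun z hz => inv_ne_zero (hf0 z hz)
      have hg'd : ∀ z : ℂ, z ≠ 0 → DifferentiableAt ℂ g' z :=
        fun z hz => (hgd z⁻¹ (inv_ne_zero hz)).comp z (differentiableAt_inv hz)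
      have hg'0 : ∀ z : ℂ, z ≠ 0 → g' z ≠ 0 :=
        fun z hz => hg0 z⁻¹ (inv_ne_zero hz)
      have hg'f' : ∀ z : ℂ, z ≠ 0 → g' (f' z) = z := by
        intro z hz
        simp only [hf', hg', inv_inv]
        exact hgf z hz
      have hf'g' : ∀ z : ℂ, z ≠ 0 → f' (g' z) = z := by
        intro z hz
        simp only [hf', hg']
        rw [hfg z⁻¹ (inv_ne_zero hz), inv_inv]
      obtain ⟨a, ha, hlin⟩ := caseA hf'd hf'0 hg'd hg'0 hg'f' hf'g' htend
      refine ⟨a⁻¹, inv_ne_zero ha, Or.inr fun z hz => ?_⟩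
      have h1 : (f z)⁻¹ = a * z := hlin z hz
      have h2 : f z ≠ 0 := hf0 z hz
      field_simp
      rw [mul_assoc, ← h1, mul_inv_cancel₀ h2]
  · exact easy_dir
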